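/- arXiv:1809.03038 — 3 statements merged into one kernel-verified Lean document; each statement's English description precedes it below -/
import Mathlib

section
/- For coprime positive integers a and c, the Dedekind sums satisfy the reciprocity law s(a,c) + s(c,a) = (1/12)(a/c + 1/(ac) + c/a) - 1/4. -/
open Finset

/-- The sawtooth function `((x))`. -/
noncomputable def saw (x : ℝ) : ℝ :=
  open Classical in
  if ∃ n : ℤ, (n : ℝ) = x then 0 else x - ⌊x⌋ - 1/2

/-- The Dedekind sum `s(a,c) = ∑_{k=1}^{c-1} ((k/c))((ak/c))`. -/
noncomputable def dsum (a c : ℤ) : ℝ :=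
  ∑ k ∈ Finset.Ico 1 c.toNat, saw ((k : ℝ) / c) * saw ((a : ℝ) * k / c)

lemma floor_int_div (p c : ℤ) (hc : 0 < c) : ⌊(p:ℝ)/(c:ℝ)⌋ = p / c := by
  have h0 : 0 ≤ p % c := Int.emod_nonneg p hc.ne'
  have h1 : p % c < c := Int.emod_lt_of_pos p hc
  have hp : p = c * (p / c) + p % c := (Int.mul_ediv_add_emod p c).symm
  have hcR : (0:ℝ) < (c:ℝ) := by exact_mod_cast hc
  have hpR : (p:ℝ) = (c:ℝ) * ((p/c : ℤ):ℝ) + ((p % c : ℤ):ℝ) := by exact_mod_cast hp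
  have h0R : (0:ℝ) ≤ ((p % c : ℤ):ℝ) := by exact_mod_cast h0
  have h1R : ((p % c : ℤ):ℝ) < (c:ℝ) := by exact_mod_cast h1
  rw [Int.floor_eq_iff]
  constructor
  · rw [le_div_iff₀ hcR]; nlinarith
  · rw [div_lt_iff₀ hcR]; nlinarith

lemma saw_of_not_dvd {p c : ℤ} (hc : 0 < c) (hnd : ¬ c ∣ p) :
    saw ((p : ℝ) / c) = ((p % c : ℤ) : ℝ) / c - 1/2 := by
  have hcR : (0:ℝ) < (c:ℝ) := by exact_mod_cast hc
  have hne : ¬ ∃ n : ℤ, (n : ℝ) = (p:ℝ)/c := by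
    rintro ⟨n, hn⟩
    apply hnd ⟨n, ?_⟩
    have : ((c * n : ℤ):ℝ) = p := by push_cast; field_simp at hn; linarith
    exact_mod_cast this.symm
  rw [saw, if_neg hne, floor_int_div p c hc]
  have hp : (p:ℝ) = (c:ℝ) * ((p/c : ℤ):ℝ) + ((p % c : ℤ):ℝ) := by
    exact_mod_cast (Int.mul_ediv_add_emod p c).symm
  field_simp
  linarith

lemma sum_Ico_id (n : ℕ) : (∑ k ∈ Ico 1 n, (k:ℤ)) * 2 = n * (n-1) := by
  induction n with
  | zero => simp
  | succ n ih =>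
    rcases Nat.eq_zero_or_pos n with h | h
    · subst h; simp
    · rw [Finset.sum_Ico_succ_top (by omega)]
      push_cast [Nat.cast_succ] at ih ⊢
      ring_nf; ring_nf at ih; linarith

lemma sum_Ico_sq (n : ℕ) : (∑ k ∈ Ico 1 n, (k:ℤ)^2) * 6 = n * (n-1) * (2*n-1) := by
  induction n with
  | zero => simp
  | succ n ih =>
    rcases Nat.eq_zero_or_pos n with h | h
    · subst h; simp
    · rw [Finset.sum_Ico_succ_top (by omega)]
      push_cast at ih ⊢
      nlinarith [ih]

lemma not_dvd_mul {a c : ℤ} (hc : 0 < c) (h : IsCoprime a c) {k : ℕ}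
    (hk : k ∈ Ico 1 c.toNat) : ¬ c ∣ a * (k:ℤ) := by
  intro hd
  have hk1 : 1 ≤ k := (mem_Ico.mp hk).1
  have hk2 : k < c.toNat := (mem_Ico.mp hk).2
  have : c ∣ (k:ℤ) := h.symm.dvd_of_dvd_mul_left hd
  have := Int.le_of_dvd (by exact_mod_cast hk1) this
  omega

lemma sum_emod_bij {a c : ℤ} (hc : 0 < c) (h : IsCoprime a c) (f : ℤ → ℤ) :
    ∑ k ∈ Ico 1 c.toNat, f (a * (k:ℤ) % c) = ∑ k ∈ Ico 1 c.toNat, f (k:ℤ) := by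
  set s := Ico 1 c.toNat with hs
  have hmem : ∀ k ∈ s, (a * (k:ℤ) % c).toNat ∈ s := by
    intro k hk
    have h0 : 0 ≤ a * (k:ℤ) % c := Int.emod_nonneg _ hc.ne'
    have h1 : a * (k:ℤ) % c < c := Int.emod_lt_of_pos _ hc
    have hne : a * (k:ℤ) % c ≠ 0 := fun h0' =>
      not_dvd_mul hc h hk (Int.dvd_of_emod_eq_zero h0')
    simp only [hs, mem_Ico]
    omega
  have hinj : ∀ k ∈ s, ∀ k' ∈ s,
      (a * (k:ℤ) % c).toNat = (a * (k':ℤ) % c).toNat → k = k' := by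
    intro k hk k' hk' he
    have hk1 := mem_Ico.mp hk
    have hk1' := mem_Ico.mp hk'
    have h0 : 0 ≤ a * (k:ℤ) % c := Int.emod_nonneg _ hc.ne'
    have h0' : 0 ≤ a * (k':ℤ) % c := Int.emod_nonneg _ hc.ne'
    have hmod : a * (k:ℤ) % c = a * (k':ℤ) % c := by omega
    have hdvd : c ∣ a * ((k:ℤ) - k') := by
      have h2 : (a * (k:ℤ) - a * (k':ℤ)) % c = 0 := by
        rw [Int.sub_emod, hmod, sub_self, Int.zero_emod]
      rw [mul_sub]
      exact Int.dvd_of_emod_eq_zero h2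
    obtain ⟨t, ht⟩ := h.symm.dvd_of_dvd_mul_left hdvd
    have hcn : (c.toNat : ℤ) = c := Int.toNat_of_nonneg hc.le
    have ht0 : t = 0 := by
      rcases lt_trichotomy t 0 with h' | h' | h'
      · nlinarith [hk1.1, hk1.2, hk1'.1, hk1'.2]
      · exact h'
      · nlinarith [hk1.1, hk1.2, hk1'.1, hk1'.2]
    have : (k:ℤ) = k' := by rw [ht0, mul_zero] at ht; linarith
    exact_mod_cast this
  have himg : Finset.image (fun k : ℕ => (a * (k:ℤ) % c).toNat) s = s := by
    apply Finset.eq_of_subset_of_card_le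
    · intro x hx; obtain ⟨k, hk, rfl⟩ := Finset.mem_image.mp hx; exact hmem k hk
    · rw [Finset.card_image_of_injOn (fun x hx y hy => hinj x hx y hy)]
  have hsum := Finset.sum_image (s := s) (f := fun j : ℕ => f (j:ℤ))
    (g := fun k : ℕ => (a * (k:ℤ) % c).toNat) hinj
  rw [himg] at hsum
  rw [show (∑ k ∈ s, f (a * (k:ℤ) % c)) = ∑ x ∈ s, f (((a * (x:ℤ) % c).toNat : ℕ) : ℤ) from ?_, ← hsum]
  apply Finset.sum_congr rfl
  intro k hk
  congr 1
  exact (Int.toNat_of_nonneg (Int.emod_nonneg _ hc.ne')).symm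

lemma count_lemma {a c : ℤ} (ha : 0 < a) (hc : 0 < c) (h : IsCoprime a c) :
    ∑ k ∈ Ico 1 c.toNat, ((a*(k:ℤ)/c) * (a*(k:ℤ)/c + 1))
      = ∑ j ∈ Ico 1 a.toNat, (2*(j:ℤ)*((c-1) - (c*(j:ℤ)/a))) := by
  have key : ∀ k ∈ Ico 1 c.toNat,
      (∑ j ∈ Ico 1 a.toNat, (if (j:ℤ)*c < a*(k:ℤ) then 2*(j:ℤ) else 0))
        = (a*(k:ℤ)/c) * (a*(k:ℤ)/c + 1) := by
    intro k hk
    have hk1 := mem_Ico.mp hk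
    set t := (a*(k:ℤ)/c).toNat with hts
    have htnn : 0 ≤ a*(k:ℤ)/c := Int.ediv_nonneg (by positivity) hc.le
    have htc : (t:ℤ) = a*(k:ℤ)/c := Int.toNat_of_nonneg htnn
    have htm : t + 1 ≤ a.toNat := by
      have : a*(k:ℤ)/c < a := by
        rw [Int.ediv_lt_iff_lt_mul hc]
        have : (k:ℤ) < c := by
          have := hk1.2; omega
        nlinarith
      omega
    have hcond : ∀ j ∈ Ico 1 a.toNat, (((j:ℤ)*c < a*(k:ℤ)) ↔ j < t + 1) := by
      intro j hj
      have hj1 := mem_Ico.mp hj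
      constructor
      · intro hlt
        have : (j:ℤ) ≤ a*(k:ℤ)/c := by
          rw [Int.le_ediv_iff_mul_le hc]; linarith
        omega
      · intro hle
        have h1 : (j:ℤ) ≤ a*(k:ℤ)/c := by omega
        rw [Int.le_ediv_iff_mul_le hc] at h1
        rcases lt_or_eq_of_le h1 with h2 | h2
        · exact h2
        · exfalso
          exact not_dvd_mul hc h hk ⟨(j:ℤ), by linarith⟩
    rw [← Finset.sum_Ico_consecutive _ (by omega : 1 ≤ t+1) htm]
    have hz : ∑ j ∈ Ico (t+1) a.toNat, (if (j:ℤ)*c < a*(k:ℤ) then 2*(j:ℤ) else 0) = 0 := by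
      apply Finset.sum_eq_zero
      intro j hj
      have hj1 := mem_Ico.mp hj
      rw [if_neg]
      rw [hcond j (mem_Ico.mpr ⟨by omega, hj1.2⟩)]
      omega
    rw [hz, add_zero]
    have : ∑ j ∈ Ico 1 (t+1), (if (j:ℤ)*c < a*(k:ℤ) then 2*(j:ℤ) else 0)
        = ∑ j ∈ Ico 1 (t+1), 2*(j:ℤ) := by
      apply Finset.sum_congr rfl
      intro j hj
      have hj1 := mem_Ico.mp hj
      rw [if_pos]
      rw [hcond j (mem_Ico.mpr ⟨hj1.1, by omega⟩)]
      exact hj1.2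
    rw [this, ← Finset.mul_sum]
    have := sum_Ico_id (t+1)
    push_cast at this ⊢
    rw [htc] at this
    linarith
  have key2 : ∀ j ∈ Ico 1 a.toNat,
      (∑ k ∈ Ico 1 c.toNat, (if (j:ℤ)*c < a*(k:ℤ) then 2*(j:ℤ) else 0))
        = 2*(j:ℤ)*((c-1) - (c*(j:ℤ)/a)) := by
    intro j hj
    have hj1 := mem_Ico.mp hj
    set u := (c*(j:ℤ)/a).toNat with hus
    have hunn : 0 ≤ c*(j:ℤ)/a := Int.ediv_nonneg (by positivity) ha.le
    have huc : (u:ℤ) = c*(j:ℤ)/a := Int.toNat_of_nonneg hunn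
    have hun : u + 1 ≤ c.toNat := by
      have : c*(j:ℤ)/a < c := by
        rw [Int.ediv_lt_iff_lt_mul ha]
        have : (j:ℤ) < a := by have := hj1.2; omega
        nlinarith
      omega
    have hcond : ∀ k ∈ Ico 1 c.toNat, (((j:ℤ)*c < a*(k:ℤ)) ↔ u + 1 ≤ k) := by
      intro k hk
      have hk1 := mem_Ico.mp hk
      constructor
      · intro hlt
        by_contra hcon
        have hku : (k:ℤ) ≤ u := by omega
        have : (k:ℤ) ≤ c*(j:ℤ)/a := by omega
        rw [Int.le_ediv_iff_mul_le ha] at this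
        nlinarith
      · intro hle
        have h1 : ¬ ((k:ℤ) ≤ c*(j:ℤ)/a) := by omega
        rw [Int.le_ediv_iff_mul_le ha] at h1
        push_neg at h1
        rcases lt_or_eq_of_le (le_of_lt h1) with h2 | h2
        · nlinarith
        · nlinarith
    have hsplit : ∑ k ∈ Ico 1 c.toNat, (if (j:ℤ)*c < a*(k:ℤ) then 2*(j:ℤ) else 0)
        = ∑ k ∈ Ico (u+1) c.toNat, 2*(j:ℤ) := by
      rw [← Finset.sum_Ico_consecutive _ (by omega : 1 ≤ u+1) hun]
      have hz : ∑ k ∈ Ico 1 (u+1), (if (j:ℤ)*c < a*(k:ℤ) then 2*(j:ℤ) else 0) = 0 := by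
        apply Finset.sum_eq_zero
        intro k hk
        have hk1 := mem_Ico.mp hk
        rw [if_neg]
        rw [hcond k (mem_Ico.mpr ⟨hk1.1, by omega⟩)]
        omega
      rw [hz, zero_add]
      apply Finset.sum_congr rfl
      intro k hk
      have hk1 := mem_Ico.mp hk
      rw [if_pos]
      rw [hcond k (mem_Ico.mpr ⟨by omega, hk1.2⟩)]
      omega
    rw [hsplit, Finset.sum_const, Nat.card_Ico, nsmul_eq_mul]
    have hcn : ((c.toNat - (u+1) : ℕ) : ℤ) = c - 1 - u := by
      have : (c.toNat : ℤ) = c := Int.toNat_of_nonneg hc.le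
      omega
    rw [hcn, huc]
    ring
  calc ∑ k ∈ Ico 1 c.toNat, ((a*(k:ℤ)/c) * (a*(k:ℤ)/c + 1))
      = ∑ k ∈ Ico 1 c.toNat, ∑ j ∈ Ico 1 a.toNat,
          (if (j:ℤ)*c < a*(k:ℤ) then 2*(j:ℤ) else 0) :=
        (Finset.sum_congr rfl fun k hk => (key k hk).symm)
    _ = ∑ j ∈ Ico 1 a.toNat, ∑ k ∈ Ico 1 c.toNat,
          (if (j:ℤ)*c < a*(k:ℤ) then 2*(j:ℤ) else 0) := Finset.sum_comm
    _ = ∑ j ∈ Ico 1 a.toNat, (2*(j:ℤ)*((c-1) - (c*(j:ℤ)/a))) :=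
        Finset.sum_congr rfl key2

lemma dsum_eq {a c : ℤ} (hc : 0 < c) (h : IsCoprime a c) :
    dsum a c = ((∑ k ∈ Ico 1 c.toNat, (k:ℤ) * (a*(k:ℤ) % c) : ℤ) : ℝ) / (c:ℝ)^2
      - ((c:ℝ)-1)/4 := by
  have hcR : (0:ℝ) < (c:ℝ) := by exact_mod_cast hc
  have hcn : (c.toNat : ℤ) = c := Int.toNat_of_nonneg hc.le
  set s := Ico 1 c.toNat with hs
  have step1 : dsum a c = ∑ k ∈ s, (((k:ℕ):ℝ)/c - 1/2) * (((a*(k:ℤ) % c : ℤ):ℝ)/c - 1/2) := by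
    unfold dsum
    apply Finset.sum_congr rfl
    intro k hk
    have hk1 := mem_Ico.mp hk
    have hnd1 : ¬ c ∣ (k:ℤ) := by
      intro hd
      have := Int.le_of_dvd (by exact_mod_cast hk1.1) hd
      omega
    have hkmod : (k:ℤ) % c = (k:ℤ) := Int.emod_eq_of_lt (by positivity) (by omega)
    have e1 : saw ((k:ℝ)/c) = ((k:ℝ))/c - 1/2 := by
      have := saw_of_not_dvd hc hnd1
      rw [hkmod] at this
      push_cast at this
      exact this
    have e2 : saw ((a:ℝ)*(k:ℝ)/c) = (((a*(k:ℤ) % c : ℤ):ℝ))/c - 1/2 := by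
      have := saw_of_not_dvd hc (not_dvd_mul hc h hk)
      push_cast at this ⊢
      convert this using 3
    rw [e1, e2]
  rw [step1]
  have step2 : ∀ k ∈ s, (((k:ℕ):ℝ)/c - 1/2) * (((a*(k:ℤ) % c : ℤ):ℝ)/c - 1/2)
      = ((k:ℕ):ℝ) * ((a*(k:ℤ) % c : ℤ):ℝ)/(c:ℝ)^2 - ((k:ℕ):ℝ)/(2*c)
        - ((a*(k:ℤ) % c : ℤ):ℝ)/(2*c) + 1/4 := by
    intro k hk
    field_simp
    ring
  rw [Finset.sum_congr rfl step2]
  rw [Finset.sum_add_distrib, Finset.sum_sub_distrib, Finset.sum_sub_distrib,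
    ← Finset.sum_div, ← Finset.sum_div, ← Finset.sum_div, Finset.sum_const,
    nsmul_eq_mul]
  have hbij := sum_emod_bij hc h id
  simp only [id] at hbij
  have hr : (∑ k ∈ s, ((a*(k:ℤ) % c : ℤ):ℝ)) = ∑ k ∈ s, ((k:ℕ):ℝ) := by
    have h2 : ((∑ k ∈ s, (a*(k:ℤ) % c) : ℤ) : ℝ) = ((∑ k ∈ s, (k:ℤ) : ℤ) : ℝ) := by
      rw [hbij]
    push_cast at h2
    exact h2
  rw [hr]
  have hS1 : (∑ k ∈ s, ((k:ℕ):ℝ)) * 2 = (c:ℝ) * ((c:ℝ) - 1) := by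
    have h3 := sum_Ico_id c.toNat
    rw [hcn] at h3
    have h4 := congrArg (fun z : ℤ => (z:ℝ)) h3
    push_cast at h4
    linarith
  have hcard : ((s.card : ℕ):ℝ) = (c:ℝ) - 1 := by
    have : s.card = c.toNat - 1 := by rw [hs, Nat.card_Ico]
    rw [this]
    have h1 : ((c.toNat - 1 : ℕ):ℤ) = c - 1 := by omega
    exact_mod_cast h1
  have hP : ((∑ k ∈ Ico 1 c.toNat, (k:ℤ) * (a*(k:ℤ) % c) : ℤ) : ℝ)
      = ∑ k ∈ s, ((k:ℕ):ℝ) * ((a*(k:ℤ) % c : ℤ):ℝ) := by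
    push_cast
    rfl
  rw [hP, hcard]
  have hdiv : (∑ k ∈ s, ((k:ℕ):ℝ))/(2*(c:ℝ)) = ((c:ℝ)-1)/4 := by
    rw [div_eq_div_iff (by positivity : (2*(c:ℝ)) ≠ 0) (by norm_num : (4:ℝ) ≠ 0)]
    linarith
  rw [hdiv]
  ring

theorem dedekind_reciprocity (a c : ℤ) (ha : 0 < a) (hc : 0 < c) (h : IsCoprime a c) :
    dsum a c + dsum c a =
      (1/12) * ((a : ℝ)/c + 1/((a : ℝ)*c) + (c : ℝ)/a) - 1/4 := by
  have hcn : (c.toNat : ℤ) = c := Int.toNat_of_nonneg hc.le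
  have han : (a.toNat : ℤ) = a := Int.toNat_of_nonneg ha.le
  set P := ∑ k ∈ Ico 1 c.toNat, (k:ℤ) * (a*(k:ℤ) % c) with hPdef
  set Q := ∑ j ∈ Ico 1 a.toNat, (j:ℤ) * (c*(j:ℤ) % a) with hQdef
  set S1c := ∑ k ∈ Ico 1 c.toNat, (k:ℤ) with hS1c
  set S2c := ∑ k ∈ Ico 1 c.toNat, (k:ℤ)^2 with hS2c
  set S1a := ∑ j ∈ Ico 1 a.toNat, (j:ℤ) with hS1a
  set S2a := ∑ j ∈ Ico 1 a.toNat, (j:ℤ)^2 with hS2a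
  set T := ∑ k ∈ Ico 1 c.toNat, (k:ℤ) * (a*(k:ℤ)/c) with hT
  set M1 := ∑ k ∈ Ico 1 c.toNat, (a*(k:ℤ)/c) with hM1
  set M2 := ∑ k ∈ Ico 1 c.toNat, (a*(k:ℤ)/c)^2 with hM2
  set N := ∑ j ∈ Ico 1 a.toNat, (j:ℤ) * (c*(j:ℤ)/a) with hN
  have f1 : P = a * S2c - c * T := by
    rw [hPdef, hS2c, hT, Finset.mul_sum, Finset.mul_sum, ← Finset.sum_sub_distrib]
    apply Finset.sum_congr rfl
    intro k hk
    rw [Int.emod_def]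
    ring
  have f2 : Q = c * S2a - a * N := by
    rw [hQdef, hS2a, hN, Finset.mul_sum, Finset.mul_sum, ← Finset.sum_sub_distrib]
    apply Finset.sum_congr rfl
    intro j hj
    rw [Int.emod_def]
    ring
  have f3 : a * S1c - c * M1 = S1c := by
    have hbij := sum_emod_bij hc h id
    simp only [id] at hbij
    calc a * S1c - c * M1
        = ∑ k ∈ Ico 1 c.toNat, (a*(k:ℤ) % c) := by
          rw [hS1c, hM1, Finset.mul_sum, Finset.mul_sum, ← Finset.sum_sub_distrib]
          apply Finset.sum_congr rfl
          intro k hk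
          rw [Int.emod_def]
      _ = S1c := hbij
  have f4 : a^2 * S2c - 2*a*c * T + c^2 * M2 = S2c := by
    have hbij := sum_emod_bij hc h (fun x => x^2)
    calc a^2 * S2c - 2*a*c * T + c^2 * M2
        = ∑ k ∈ Ico 1 c.toNat, (a*(k:ℤ) % c)^2 := by
          rw [hS2c, hT, hM2, Finset.mul_sum, Finset.mul_sum, Finset.mul_sum,
            ← Finset.sum_sub_distrib, ← Finset.sum_add_distrib]
          apply Finset.sum_congr rfl
          intro k hk
          rw [Int.emod_def]
          ring
      _ = S2c := hbij
  have f5 : M2 + M1 = 2*(c-1) * S1a - 2 * N := by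
    have hcount := count_lemma ha hc h
    calc M2 + M1 = ∑ k ∈ Ico 1 c.toNat, ((a*(k:ℤ)/c) * (a*(k:ℤ)/c + 1)) := by
          rw [hM2, hM1, ← Finset.sum_add_distrib]
          apply Finset.sum_congr rfl
          intro k hk
          ring
      _ = ∑ j ∈ Ico 1 a.toNat, (2*(j:ℤ)*((c-1) - (c*(j:ℤ)/a))) := hcount
      _ = 2*(c-1) * S1a - 2 * N := by
          rw [hS1a, hN, Finset.mul_sum, Finset.mul_sum, ← Finset.sum_sub_distrib]
          apply Finset.sum_congr rfl
          intro j hj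
          ring
  have f6 : S1c * 2 = c * (c-1) := by
    have := sum_Ico_id c.toNat
    rw [hcn] at this
    exact this
  have f7 : S2c * 6 = c * (c-1) * (2*c-1) := by
    have := sum_Ico_sq c.toNat
    rw [hcn] at this
    exact this
  have f6' : S1a * 2 = a * (a-1) := by
    have := sum_Ico_id a.toNat
    rw [han] at this
    exact this
  have f7' : S2a * 6 = a * (a-1) * (2*a-1) := by
    have := sum_Ico_sq a.toNat
    rw [han] at this
    exact this
  have hI : 12*a^2*P + 12*c^2*Q = a*c*(a^2+c^2+1) + 3*a^2*c^2*(a+c-3) := by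
    linear_combination 12*a^2*f1 + 12*c^2*f2 - 6*a*c*f3 + 6*a*f4 - 6*a*c^2*f5
      + 3*a*c*(a-1)*f6 + (a^3+a)*f7 - 6*a*c^2*(c-1)*f6' + 2*c^3*f7'
  have hda := dsum_eq hc h
  have hdc := dsum_eq ha h.symm
  rw [← hPdef] at hda
  rw [← hQdef] at hdc
  rw [hda, hdc]
  have haR : (0:ℝ) < (a:ℝ) := by exact_mod_cast ha
  have hcR : (0:ℝ) < (c:ℝ) := by exact_mod_cast hc
  have hIr : 12*(a:ℝ)^2*((P:ℤ):ℝ) + 12*(c:ℝ)^2*((Q:ℤ):ℝ)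
      = (a:ℝ)*c*((a:ℝ)^2+(c:ℝ)^2+1) + 3*(a:ℝ)^2*(c:ℝ)^2*((a:ℝ)+(c:ℝ)-3) := by
    exact_mod_cast congrArg (fun z : ℤ => (z:ℝ)) hI
  have ha0 : (a:ℝ) ≠ 0 := ne_of_gt haR
  have hc0 : (c:ℝ) ≠ 0 := ne_of_gt hcR
  field_simp
  linear_combination 4 * hIr
end

section
/- For any positive integer c, 6c·s(1,c) is an integer; more generally, for coprime a, c with c > 0, 6c·s(a,c) ∈ ℤ. -/
private lemma floor_int_div_real (m c : ℤ) (hc : 0 < c) : ⌊(m : ℝ) / (c : ℝ)⌋ = m / c := by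
  have hct : ((c.toNat : ℕ) : ℝ) = (c : ℝ) := by exact_mod_cast Int.toNat_of_nonneg hc.le
  have h1 : (m : ℝ) / (c : ℝ) = ((((m : ℚ)) / ((c.toNat : ℕ) : ℚ) : ℚ) : ℝ) := by
    push_cast
    rw [hct]
  rw [h1, Rat.floor_cast, Rat.floor_intCast_div_natCast, Int.toNat_of_nonneg hc.le]

private lemma saw_int_div (m c : ℤ) (hc : 0 < c) (h : ¬ c ∣ m) :
    saw ((m : ℝ) / (c : ℝ)) = ((m % c : ℤ) : ℝ) / c - 1/2 := by
  have hc0 : (c : ℝ) ≠ 0 := by exact_mod_cast hc.ne'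
  have hne : ¬ ∃ n : ℤ, (n : ℝ) = (m : ℝ) / (c : ℝ)  := by
    rintro ⟨n, hn⟩
    apply h
    refine ⟨n, ?_⟩
    have : (m : ℝ) = (c : ℝ) * (n : ℝ) := by
      field_simp at hn
      linarith [hn]
    exact_mod_cast this
  rw [saw, if_neg hne, floor_int_div_real m c hc]
  have := Int.emod_def m c
  have hcast : ((m % c : ℤ) : ℝ) = (m : ℝ) - (c : ℝ) * ((m / c : ℤ) : ℝ) := by
    rw [this]; push_cast; ring
  rw [hcast]
  field_simp

private lemma six_sum_sq (n : ℕ) :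
    6 * ∑ k ∈ Finset.range n, (k : ℤ)^2 = ((n : ℤ) - 1) * n * (2 * n - 1) := by
  induction n with
  | zero => simp
  | succ n ih =>
    rw [Finset.sum_range_succ, mul_add, ih]
    push_cast
    ring

private lemma two_sum_id (n : ℕ) :
    2 * ∑ k ∈ Finset.range n, (k : ℤ) = ((n : ℤ) - 1) * n := by
  induction n with
  | zero => simp
  | succ n ih =>
    rw [Finset.sum_range_succ, mul_add, ih]
    push_cast
    ring

private lemma sum_Ico_eq_range {M : Type*} [AddCommMonoid M] (f : ℕ → M) (hf : f 0 = 0) (n : ℕ) :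
    ∑ k ∈ Finset.Ico 1 n, f k = ∑ k ∈ Finset.range n, f k := by
  rcases Nat.eq_zero_or_pos n with rfl | hn
  · simp
  · rw [Finset.range_eq_Ico, ← Finset.sum_Ico_consecutive f (Nat.zero_le 1) hn]
    simp [hf]

private lemma key (c : ℤ) (hc : 0 < c) (a : ℤ) (hcop : IsCoprime a c) :
    ∃ n : ℤ, (n : ℝ) = 6 * c * dsum a c := by
  have hc0 : (c : ℝ) ≠ 0 := by exact_mod_cast hc.ne'
  set M : ℤ := ∑ k ∈ Finset.Ico 1 c.toNat,
      3 * (2 * (k : ℤ) - c) * (2 * ((a * k) % c) - c) with hM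
  -- Step 1: (M : ℝ) = 12 * c^2 * dsum a c
  have hstep1 : (M : ℝ) = 12 * c^2 * dsum a c := by
    rw [dsum, hM, Finset.mul_sum, Int.cast_sum]
    apply Finset.sum_congr rfl
    intro k hk
    rw [Finset.mem_Ico] at hk
    have hk1 : 1 ≤ k := hk.1
    have hk2 : (k : ℤ) < c := by
      have := hk.2
      omega
    have hkpos : (0 : ℤ) < k := by exact_mod_cast hk1
    have hndvd : ¬ c ∣ (k : ℤ) := by
      intro hd
      have := Int.le_of_dvd hkpos hd
      omega
    have hndvd2 : ¬ c ∣ a * k := by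
      intro hd
      exact hndvd (hcop.symm.dvd_of_dvd_mul_left hd)
    have h1 : saw ((k : ℝ) / c) = ((k : ℤ) : ℝ) / c - 1/2 := by
      have := saw_int_div k c hc hndvd
      rw [Int.emod_eq_of_lt hkpos.le hk2] at this
      simpa using this
    have h2 : saw ((a : ℝ) * k / c) = (((a * k) % c : ℤ) : ℝ) / c - 1/2 := by
      have := saw_int_div (a * k) c hc hndvd2
      push_cast at this ⊢
      convert this using 3
    rw [h1, h2]
    push_cast
    field_simp
    ring
  -- Step 2: 2 * c ∣ M
  have hdvd : 2 * c ∣ M := by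
    set M' : ℤ := ∑ k ∈ Finset.Ico 1 c.toNat,
        3 * (2 * (k : ℤ) - c) * (2 * (a * k) - c) with hM'
    have h1 : 2 * c ∣ M - M' := by
      rw [hM, hM', ← Finset.sum_sub_distrib]
      apply Finset.dvd_sum
      intro k _
      have hmod : c ∣ ((a * k) % c - a * k) := by
        rw [Int.emod_def]
        exact ⟨-(a * k / c), by ring⟩
      obtain ⟨t, ht⟩ := hmod
      exact ⟨3 * (2 * (k : ℤ) - c) * t, by rw [show (3:ℤ) * (2 * (k : ℤ) - c) * (2 * ((a * k) % c) - c) - 3 * (2 * (k : ℤ) - c) * (2 * (a * k) - c) = 3 * (2 * (k : ℤ) - c) * (2 * ((a * k) % c - a * k)) by ring, ht]; ring⟩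
    have h2 : 2 * c ∣ M' := by
      have hexp : M' = 12 * a * (∑ k ∈ Finset.Ico 1 c.toNat, (k : ℤ)^2)
          - 6 * c * (1 + a) * (∑ k ∈ Finset.Ico 1 c.toNat, (k : ℤ))
          + (c.toNat - 1 : ℕ) * (3 * c^2) := by
        have hcongr : ∀ k ∈ Finset.Ico 1 c.toNat,
            3 * (2 * (k : ℤ) - c) * (2 * (a * k) - c)
              = 12 * a * (k : ℤ)^2 - 6 * c * (1 + a) * k + 3 * c^2 := by
          intro k _
          ring
        rw [hM', Finset.sum_congr rfl hcongr, Finset.sum_add_distrib, Finset.sum_sub_distrib,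
          Finset.sum_const, nsmul_eq_mul, ← Finset.mul_sum, ← Finset.mul_sum, Nat.card_Ico]
      rw [hexp]
      have hrange2 : (∑ k ∈ Finset.Ico 1 c.toNat, (k : ℤ)^2)
          = ∑ k ∈ Finset.range c.toNat, (k : ℤ)^2 := sum_Ico_eq_range _ (by simp) _
      have hrange1 : (∑ k ∈ Finset.Ico 1 c.toNat, (k : ℤ))
          = ∑ k ∈ Finset.range c.toNat, (k : ℤ) := sum_Ico_eq_range _ (by simp) _
      have hct : ((c.toNat : ℕ) : ℤ) = c := Int.toNat_of_nonneg hc.le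
      obtain ⟨t, ht⟩ := Int.even_mul_succ_self (c - 1)
      have heven : c * (c - 1) = 2 * t := by linarith [ht]
      have hd1 : 2 * c ∣ 12 * a * (∑ k ∈ Finset.Ico 1 c.toNat, (k : ℤ)^2) := by
        refine ⟨a * (c - 1) * (2 * c - 1), ?_⟩
        have h6 := six_sum_sq c.toNat
        rw [hct] at h6
        rw [hrange2]
        have : 12 * a * (∑ k ∈ Finset.range c.toNat, (k : ℤ)^2)
            = 2 * a * (6 * ∑ k ∈ Finset.range c.toNat, (k : ℤ)^2) := by ring
        rw [this, h6]; ring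
      have hd2 : 2 * c ∣ 6 * c * (1 + a) * (∑ k ∈ Finset.Ico 1 c.toNat, (k : ℤ)) := by
        refine ⟨3 * (1 + a) * t * 1, ?_⟩
        have h2s := two_sum_id c.toNat
        rw [hct] at h2s
        rw [hrange1]
        have : 6 * c * (1 + a) * (∑ k ∈ Finset.range c.toNat, (k : ℤ))
            = 3 * c * (1 + a) * (2 * ∑ k ∈ Finset.range c.toNat, (k : ℤ)) := by ring
        rw [this, h2s]
        have : 3 * c * (1 + a) * ((c - 1) * c) = 3 * (1 + a) * (c * (c - 1)) * c := by ring
        rw [this, heven]; ring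
      have hd3 : 2 * c ∣ ((c.toNat - 1 : ℕ) : ℤ) * (3 * c^2) := by
        refine ⟨3 * t, ?_⟩
        have hn1 : ((c.toNat - 1 : ℕ) : ℤ) = c - 1 := by
          omega
        rw [hn1]
        have : (c - 1) * (3 * c^2) = 3 * (c * (c - 1)) * c := by ring
        rw [this, heven]; ring
      exact dvd_add (dvd_sub hd1 hd2) hd3
    have := dvd_add h1 h2
    simpa using this
  obtain ⟨n, hn⟩ := hdvd
  refine ⟨n, ?_⟩
  have h2c : (2 : ℝ) * c ≠ 0 := by
    simp [hc0]
  apply mul_left_cancel₀ h2c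
  have : ((M : ℤ) : ℝ) = 2 * c * n := by exact_mod_cast congrArg (Int.cast : ℤ → ℝ) hn
  rw [← this, hstep1]
  ring

theorem dsum_denominator (c : ℤ) (hc : 0 < c) :
    (∃ n : ℤ, (n : ℝ) = 6 * c * dsum 1 c) ∧
    ∀ a : ℤ, IsCoprime a c → ∃ n : ℤ, (n : ℝ) = 6 * c * dsum a c := by
  exact ⟨key c hc 1 (isCoprime_one_left), fun a h => key c hc a h⟩
end

section
/- For coprime integers a, c with c > 0, the Dedekind sum satisfies the bound |s(a,c)| ≤ (c-1)(c-2)/(12c) = s(1,c); in particular |s(a,c)| < c/12. -/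
lemma saw_add_int (x : ℝ) (n : ℤ) : saw (x + n) = saw x := by
  have hiff : (∃ m : ℤ, (m : ℝ) = x + n) ↔ ∃ m : ℤ, (m : ℝ) = x := by
    constructor
    · rintro ⟨m, hm⟩; exact ⟨m - n, by push_cast; linarith⟩
    · rintro ⟨m, hm⟩; exact ⟨m + n, by push_cast; linarith⟩
  by_cases hx : ∃ m : ℤ, (m : ℝ) = x
  · rw [saw, if_pos (hiff.mpr hx), saw, if_pos hx]
  · rw [saw, if_neg (fun hh => hx (hiff.mp hh)), saw, if_neg hx, Int.floor_add_intCast]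
    push_cast; ring

lemma not_int_div {m c : ℤ} (hc : 0 < c) (h1 : 0 < m) (h2 : m < c) :
    ¬∃ n : ℤ, (n : ℝ) = (m : ℝ) / c := by
  rintro ⟨n, hn⟩
  have hc' : (c : ℝ) ≠ 0 := by positivity
  have hnc : (n : ℝ) * c = m := by field_simp at hn; linarith [hn]
  have hZ : n * c = m := by exact_mod_cast hnc
  rcases le_or_gt n 0 with h | h
  · nlinarith
  · have h1' : (1:ℤ) ≤ n := h
    nlinarith

lemma saw_div_eq {m c : ℤ} (hc : 0 < c) (h1 : 0 < m) (h2 : m < c) :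
    saw ((m : ℝ) / c) = (m : ℝ) / c - 1/2 := by
  rw [saw, if_neg (not_int_div hc h1 h2)]
  have hc' : (0:ℝ) < c := by exact_mod_cast hc
  have hfl : ⌊(m : ℝ) / c⌋ = 0 := by
    rw [Int.floor_eq_zero_iff]
    constructor
    · positivity
    · rw [div_lt_one hc']
      exact_mod_cast h2
  rw [hfl]; push_cast; ring

/-- Periodicity reduction for the sawtooth of `a*k/c`. -/
lemma saw_mul_div (a c : ℤ) (hc : 0 < c) (k : ℕ) :
    saw ((a : ℝ) * k / c) = saw (((a * (k : ℤ) % c : ℤ) : ℝ) / c) := by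
  have hc' : (c : ℝ) ≠ 0 := by positivity
  have hh := Int.emod_add_mul_ediv (a * (k : ℤ)) c
  have hcast : ((a * (k : ℤ) % c : ℤ) : ℝ) + (c : ℝ) * ((a * (k : ℤ) / c : ℤ) : ℝ)
      = (a : ℝ) * k := by exact_mod_cast hh
  have hdc : (a : ℝ) * k / c
      = ((a * (k : ℤ) % c : ℤ) : ℝ) / c + ((a * (k : ℤ) / c : ℤ) : ℝ) := by
    field_simp
    linarith
  rw [hdc, saw_add_int]

lemma sum_aux (c : ℝ) (m : ℕ) :
    ∑ i ∈ Finset.range m, ((1 + (i : ℝ)) / c - 1/2) ^ 2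
      = ((m:ℝ) * (m - 1) * (2 * m - 1) / 6 + m * (m - 1) + m) / c ^ 2
        - ((m:ℝ) * (m - 1) / 2 + m) / c + m / 4 := by
  induction m with
  | zero => simp
  | succ p ih =>
    rw [Finset.sum_range_succ, ih]
    push_cast
    ring

/-- key permutation lemma -/
lemma perm_sum (a c : ℤ) (hc : 0 < c) (h : IsCoprime a c) :
    ∑ k ∈ Finset.Ico 1 c.toNat, saw ((a : ℝ) * k / c) ^ 2
      = ∑ k ∈ Finset.Ico 1 c.toNat, saw ((k : ℝ) / c) ^ 2 := by
  obtain ⟨u, v, huv⟩ := h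
  have hu : IsCoprime u c := ⟨a, v, by linarith [huv, mul_comm u a]⟩
  have ha : IsCoprime a c := ⟨u, v, huv⟩
  -- bounds on b*k % c for b coprime to c
  have hcop : ∀ b : ℤ, IsCoprime b c → ∀ k : ℕ, k ∈ Finset.Ico 1 c.toNat →
      0 < b * (k : ℤ) % c ∧ b * (k : ℤ) % c < c := by
    intro b hb k hk
    rw [Finset.mem_Ico] at hk
    have hk1 : (1 : ℤ) ≤ (k : ℤ) := by exact_mod_cast hk.1
    have hk2 : (k : ℤ) < c := by
      have := hk.2; omega
    have hne : b * (k : ℤ) % c ≠ 0 := by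
      intro hdvd
      have hdk : c ∣ (k : ℤ) := hb.symm.dvd_of_dvd_mul_left (Int.dvd_of_emod_eq_zero hdvd)
      have := Int.le_of_dvd (by omega) hdk
      omega
    have h0 : 0 ≤ b * (k : ℤ) % c := Int.emod_nonneg _ (by omega)
    exact ⟨lt_of_le_of_ne h0 (Ne.symm hne), Int.emod_lt_of_pos _ hc⟩
  -- two-sided inverse property
  have inv_eq : ∀ p q : ℤ, p * q % c = 1 % c → ∀ k : ℕ, k ∈ Finset.Ico 1 c.toNat →
      ((p * (((q * (k : ℤ)) % c : ℤ).toNat : ℤ)) % c).toNat = k := by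
    intro p q hpq k hk
    rw [Finset.mem_Ico] at hk
    have hk2 : (k : ℤ) < c := by have := hk.2; omega
    have h0 : 0 ≤ q * (k : ℤ) % c := Int.emod_nonneg _ (by omega)
    rw [Int.toNat_of_nonneg h0]
    have e1 : (q * (k : ℤ)) % c ≡ q * (k : ℤ) [ZMOD c] := Int.emod_emod_of_dvd _ dvd_rfl
    have e2 : p * q ≡ 1 [ZMOD c] := hpq
    have e3 : p * ((q * (k : ℤ)) % c) ≡ (k : ℤ) [ZMOD c] := by
      calc p * ((q * (k : ℤ)) % c) ≡ p * (q * (k : ℤ)) [ZMOD c] := e1.mul_left p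
        _ = (p * q) * (k : ℤ) := by ring
        _ ≡ 1 * (k : ℤ) [ZMOD c] := e2.mul_right _
        _ = (k : ℤ) := one_mul _
    have e4 : (p * ((q * (k : ℤ)) % c)) % c = (k : ℤ) % c := e3
    have e5 : (k : ℤ) % c = (k : ℤ) := Int.emod_eq_of_lt (by positivity) hk2
    omega
  have hau : a * u % c = 1 % c := by
    have : a * u ≡ 1 [ZMOD c] := Int.ModEq.symm (Int.modEq_iff_dvd.mpr ⟨-v, by linear_combination huv⟩)
    exact this
  have hua : u * a % c = 1 % c := by rw [mul_comm]; exact hau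
  refine Finset.sum_nbij' (fun k => ((a * (k : ℤ)) % c).toNat)
    (fun k => ((u * (k : ℤ)) % c).toNat) ?_ ?_ ?_ ?_ ?_
  · intro k hk
    have := hcop a ha k hk
    rw [Finset.mem_Ico]
    omega
  · intro k hk
    have := hcop u hu k hk
    rw [Finset.mem_Ico]
    omega
  · intro k hk
    exact inv_eq u a hua k hk
  · intro k hk
    exact inv_eq a u hau k hk
  · intro k hk
    rw [Finset.mem_Ico] at hk
    have hb := hcop a ha k (by rw [Finset.mem_Ico]; exact hk)
    rw [saw_mul_div a c hc k]
    have hx : (((a * (k : ℤ) % c).toNat : ℕ) : ℝ) = ((a * (k : ℤ) % c : ℤ) : ℝ) := by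
      exact_mod_cast congrArg (Int.cast : ℤ → ℝ) (Int.toNat_of_nonneg hb.1.le)
    rw [hx]

theorem dsum_bound (a c : ℤ) (hc : 0 < c) (h : IsCoprime a c) :
    |dsum a c| ≤ ((c : ℝ) - 1) * ((c : ℝ) - 2) / (12 * c) ∧
    ((c : ℝ) - 1) * ((c : ℝ) - 2) / (12 * c) = dsum 1 c ∧
    |dsum a c| < (c : ℝ) / 12 := by
  have hc0 : (0:ℝ) < c := by exact_mod_cast hc
  have hc' : (c:ℝ) ≠ 0 := ne_of_gt hc0
  have hc1 : (1:ℝ) ≤ c := by exact_mod_cast hc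
  set n := c.toNat with hn
  have hnc : (n : ℝ) = c := by
    rw [hn]; exact_mod_cast Int.toNat_of_nonneg hc.le
  have hn1 : 1 ≤ n := by omega
  -- the value of each sawtooth in the range
  have hsawk : ∀ k ∈ Finset.Ico 1 n, saw ((k : ℝ) / c) = (k : ℝ) / c - 1/2 := by
    intro k hk
    rw [Finset.mem_Ico] at hk
    have h1 : (0 : ℤ) < (k : ℤ) := by exact_mod_cast hk.1
    have h2 : (k : ℤ) < c := by have := hk.2; omega
    have := saw_div_eq hc h1 h2
    simpa using this
  -- S = sum of squares
  set S := ∑ k ∈ Finset.Ico 1 n, saw ((k : ℝ) / c) ^ 2 with hS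
  have hSval : S = ((c : ℝ) - 1) * ((c : ℝ) - 2) / (12 * c) := by
    rw [hS]
    rw [Finset.sum_congr rfl (fun k hk => by rw [hsawk k hk])]
    rw [Finset.sum_Ico_eq_sum_range]
    have hcast : ∀ i : ℕ, (((1 + i : ℕ) : ℝ) / c - 1/2) ^ 2 = ((1 + (i:ℝ)) / c - 1/2) ^ 2 := by
      intro i; push_cast; ring
    rw [Finset.sum_congr rfl (fun i _ => hcast i), sum_aux]
    have hm : ((n - 1 : ℕ) : ℝ) = c - 1 := by
      push_cast [hn1]
      linarith [hnc]
    rw [hm]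
    field_simp
    ring
  have hSnonneg : 0 ≤ S := Finset.sum_nonneg fun k _ => sq_nonneg _
  -- dsum 1 c = S
  have hd1 : dsum 1 c = S := by
    rw [dsum, hS]
    apply Finset.sum_congr rfl
    intro k _
    push_cast
    rw [one_mul, sq]
  -- Cauchy-Schwarz
  have cs := Finset.sum_mul_sq_le_sq_mul_sq (Finset.Ico 1 n)
    (fun k => saw ((k : ℝ) / c)) (fun k => saw ((a : ℝ) * k / c))
  have hperm := perm_sum a c hc h
  have hcs : (dsum a c) ^ 2 ≤ S ^ 2 := by
    rw [dsum]
    calc (∑ k ∈ Finset.Ico 1 n, saw ((k : ℝ) / c) * saw ((a : ℝ) * k / c)) ^ 2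
        ≤ (∑ k ∈ Finset.Ico 1 n, saw ((k : ℝ) / c) ^ 2)
          * ∑ k ∈ Finset.Ico 1 n, saw ((a : ℝ) * k / c) ^ 2 := cs
      _ = S * S := by rw [hperm]
      _ = S ^ 2 := (sq S).symm
  have habs : |dsum a c| ≤ S := abs_le_of_sq_le_sq hcs hSnonneg
  refine ⟨hSval ▸ habs, by rw [hd1, hSval], ?_⟩
  have hlt : ((c : ℝ) - 1) * ((c : ℝ) - 2) / (12 * c) < (c : ℝ) / 12 := by
    rw [div_lt_div_iff₀ (by positivity) (by norm_num)]
    nlinarith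
  exact lt_of_le_of_lt (hSval ▸ habs) hlt
end
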